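/- arXiv:0805.0726 — 2 statements merged into one kernel-verified Lean document; each statement's English description precedes it below -/
import Mathlib

section
/- In an SP-structure satisfying Symmetry, Non-negativity, Boundedness, O-Projection, and Factorization: if a ⊥ b, x ⊥ a, and p(y,a) + p(y,b) = 1, then p(x,y) = p(x,b)·p(y,b). -/
variable {Ω : Type*}

def IsOrtho (p : Ω → Ω → ℝ) (A : Set Ω) : Prop :=
  ∀ x ∈ A, ∀ y ∈ A, x ≠ y → p x y = 0

noncomputable def pSet (p : Ω → Ω → ℝ) (x : Ω) (A : Set Ω) : ℝ :=
  ∑' a : A, p x a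

def Symm (p : Ω → Ω → ℝ) : Prop := ∀ x y, p x y = p y x

def Nonneg (p : Ω → Ω → ℝ) : Prop := ∀ x y, 0 ≤ p x y

def Bounded (p : Ω → Ω → ℝ) : Prop :=
  ∀ (x : Ω) (A : Set Ω), IsOrtho p A →
    Summable (fun a : A => p x a) ∧ pSet p x A ≤ 1

def OProj (p : Ω → Ω → ℝ) : Prop :=
  ∀ (x : Ω) (A : Set Ω), IsOrtho p A → pSet p x A < 1 →
    ∃ y, pSet p y A = 0 ∧ pSet p x A + p x y = 1

def Factor (p : Ω → Ω → ℝ) : Prop :=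
  ∀ (x y z : Ω) (A : Set Ω), IsOrtho p A → pSet p y A = 1 → pSet p z A = 1 →
    p x y = pSet p x A → p x z = p x y * p y z

def Subgen (p : Ω → Ω → ℝ) (A : Set Ω) : Set Ω := {x | pSet p x A = 1}

def IsSubspace (p : Ω → Ω → ℝ) (X : Set Ω) : Prop :=
  ∃ A, IsOrtho p A ∧ X = Subgen p A

def Standard (p : Ω → Ω → ℝ) : Prop := ∀ x y, p x y = 1 → x = y

lemma pSet_singleton (p : Ω → Ω → ℝ) (z u : Ω) : pSet p z {u} = p z u := by
  simp only [pSet]; exact tsum_singleton u (p z)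

lemma pSet_pair (p : Ω → Ω → ℝ) {u v : Ω} (h : u ≠ v) (z : Ω) :
    pSet p z {u, v} = p z u + p z v := by
  classical
  have hs : ({u, v} : Set Ω) = (({u, v} : Finset Ω) : Set Ω) := by simp
  rw [pSet, hs, Finset.tsum_subtype', Finset.sum_pair h]

lemma pSet_triple (p : Ω → Ω → ℝ) {u v w : Ω} (huv : u ≠ v) (huw : u ≠ w)
    (hvw : v ≠ w) (z : Ω) : pSet p z {u, v, w} = p z u + p z v + p z w := by
  classical
  have hs : ({u, v, w} : Set Ω) = (({u, v, w} : Finset Ω) : Set Ω) := by simp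
  rw [pSet, hs, Finset.tsum_subtype']
  rw [show ({u, v, w} : Finset Ω) = insert u {v, w} from rfl,
    Finset.sum_insert (by simp [huv, huw]), Finset.sum_pair hvw]
  ring

lemma ortho_singleton (p : Ω → Ω → ℝ) (u : Ω) : IsOrtho p {u} := by
  intro a ha b hb hab
  simp only [Set.mem_singleton_iff] at ha hb
  exact absurd (ha.trans hb.symm) hab

lemma p_self (p : Ω → Ω → ℝ) (h1 : Symm p) (h3 : Bounded p) (h4 : OProj p)
    (x : Ω) : p x x = 1 := by
  by_contra h
  have hb := (h3 x {x} (ortho_singleton p x)).2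
  rw [pSet_singleton] at hb
  have hlt : pSet p x {x} < 1 := by rw [pSet_singleton]; exact lt_of_le_of_ne hb h
  obtain ⟨v, hv0, hv1⟩ := h4 x {x} (ortho_singleton p x) hlt
  rw [pSet_singleton] at hv0 hv1
  rw [h1 x v, hv0, add_zero] at hv1
  exact h hv1

theorem stmt8 (p : Ω → Ω → ℝ) (h1 : Symm p) (h2 : Nonneg p) (h3 : Bounded p)
    (h4 : OProj p) (h5 : Factor p) (a b x y : Ω)
    (hab : p a b = 0) (hxa : p x a = 0) (hy : p y a + p y b = 1) :
    p x y = p x b * p y b := by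
  have paa : p a a = 1 := p_self p h1 h3 h4 a
  have pbb : p b b = 1 := p_self p h1 h3 h4 b
  have hne : a ≠ b := by rintro rfl; rw [paa] at hab; norm_num at hab
  by_cases hxb : p x b = 1
  · -- x, b ∈ closure of {b}
    have hfac := h5 y b x {b} (ortho_singleton p b)
      (by rw [pSet_singleton]; exact pbb) (by rw [pSet_singleton]; exact hxb)
      (by rw [pSet_singleton])
    rw [h1 x y, hfac, h1 b x, hxb, mul_one, one_mul]
  · have hoAB : IsOrtho p {a, b} := by
      intro u hu v hv huv
      rcases hu with rfl | hu
      · rcases hv with rfl | hv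
        · exact absurd rfl huv
        · rw [Set.mem_singleton_iff] at hv; subst hv; exact hab
      · rw [Set.mem_singleton_iff] at hu; subst hu
        rcases hv with rfl | hv
        · rw [h1]; exact hab
        · rw [Set.mem_singleton_iff] at hv; subst hv; exact absurd rfl huv
    have hxAB : pSet p x {a, b} = p x b := by
      rw [pSet_pair p hne, hxa, zero_add]
    have hle := (h3 x {a, b} hoAB).2
    have hlt : pSet p x {a, b} < 1 := by
      rw [hxAB]; exact lt_of_le_of_ne (hxAB ▸ hle) hxb
    obtain ⟨w, hw0, hw1⟩ := h4 x {a, b} hoAB hlt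
    rw [pSet_pair p hne] at hw0
    have hwa : p w a = 0 := by nlinarith [h2 w a, h2 w b]
    have hwb : p w b = 0 := by nlinarith [h2 w a, h2 w b]
    rw [hxAB] at hw1
    have haw : a ≠ w := by rintro rfl; rw [h1] at hwa; rw [hwa] at paa; norm_num at paa
    have hbw : b ≠ w := by rintro rfl; rw [h1] at hwb; rw [hwb] at pbb; norm_num at pbb
    -- {a, b, w} orthogonal, so p y w = 0
    have hoABW : IsOrtho p {a, b, w} := by
      intro u hu v hv huv
      rcases hu with rfl | rfl | rfl
      · rcases hv with rfl | rfl | rfl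
        · exact absurd rfl huv
        · exact hab
        · rw [h1]; exact hwa
      · rcases hv with rfl | rfl | rfl
        · rw [h1]; exact hab
        · exact absurd rfl huv
        · rw [h1]; exact hwb
      · rcases hv with rfl | rfl | rfl
        · exact hwa
        · exact hwb
        · exact absurd rfl huv
    have hyABW := (h3 y {a, b, w} hoABW).2
    rw [pSet_triple p hne haw hbw] at hyABW
    have hyw : p y w = 0 := le_antisymm (by linarith) (h2 y w)
    -- Factor over B = {b, w}
    have hoBW : IsOrtho p {b, w} := by
      intro u hu v hv huv
      rcases hu with rfl | hu
      · rcases hv with rfl | hv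
        · exact absurd rfl huv
        · rw [Set.mem_singleton_iff] at hv; subst hv; rw [h1]; exact hwb
      · rw [Set.mem_singleton_iff] at hu; subst hu
        rcases hv with rfl | hv
        · exact hwb
        · rw [Set.mem_singleton_iff] at hv; subst hv; exact absurd rfl huv
    have hbB : pSet p b {b, w} = 1 := by
      rw [pSet_pair p hbw, pbb, h1 b w, hwb, add_zero]
    have hxB : pSet p x {b, w} = 1 := by
      rw [pSet_pair p hbw]; linarith
    have hyB : pSet p y {b, w} = p y b := by
      rw [pSet_pair p hbw, hyw, add_zero]
    have hfac := h5 y b x {b, w} hoBW hbB hxB hyB.symm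
    rw [h1 y x, h1 b x] at hfac
    rw [hfac]; ring
end

section
/- In an SP-structure satisfying Symmetry, Non-negativity, Boundedness, O-Projection, and Factorization: if X is a subspace, x ∈ X, A ⊆ X is an ortho-set with p(x,A) < 1, then any state y with p(y,A) = 0 and p(x,A) + p(x,y) = 1 belongs to X. -/
variable {Ω : Type*}

/-- Sum over `insert z A` splits off the `z` term. -/
lemma pSet_insert (p : Ω → Ω → ℝ) (x z : Ω) (A : Set Ω) (hz : z ∉ A)
    (hs : Summable (fun a : A => p x a)) :
    pSet p x (insert z A) = p x z + pSet p x A := by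
  unfold pSet
  rw [Set.insert_eq, Summable.tsum_union_disjoint (Set.disjoint_singleton_left.2 hz)
    (Set.Finite.summable (Set.finite_singleton z) _) hs, tsum_singleton]

/-- Each term of a nonnegative ortho-sum is at most the sum. -/
lemma term_le (p : Ω → Ω → ℝ) (h2 : Nonneg p) (h3 : Bounded p) (x : Ω) {A : Set Ω}
    (hA : IsOrtho p A) {a : Ω} (ha : a ∈ A) : p x a ≤ pSet p x A :=
  Summable.le_tsum (h3 x A hA).1 ⟨a, ha⟩ fun j _ => h2 x j

lemma term_zero (p : Ω → Ω → ℝ) (h2 : Nonneg p) (h3 : Bounded p) (x : Ω) {A : Set Ω}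
    (hA : IsOrtho p A) (h0 : pSet p x A = 0) {a : Ω} (ha : a ∈ A) : p x a = 0 :=
  le_antisymm (h0 ▸ term_le p h2 h3 x hA ha) (h2 x a)

/-- In an SP-structure, `p x x = 1` for every `x`. -/
lemma self_one (p : Ω → Ω → ℝ) (h1 : Symm p) (h3 : Bounded p) (h4 : OProj p) (u : Ω) :
    p u u = 1 := by
  have hortho : IsOrtho p ({u} : Set Ω) := by
    intro a ha b hb hab
    rw [Set.mem_singleton_iff] at ha hb
    exact absurd (ha.trans hb.symm) hab
  have hsing : pSet p u ({u} : Set Ω) = p u u := tsum_singleton u (p u)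
  have hle : p u u ≤ 1 := hsing ▸ (h3 u _ hortho).2
  rcases lt_or_eq_of_le hle with hlt | heq
  · obtain ⟨v, hv0, hv1⟩ := h4 u ({u} : Set Ω) hortho (hsing ▸ hlt)
    rw [hsing] at hv1
    have : p u v = 0 := by
      rw [h1 u v, ← tsum_singleton (u : Ω) (p v)]; exact hv0
    linarith
  · exact heq

theorem stmt11 (p : Ω → Ω → ℝ) (h1 : Symm p) (h2 : Nonneg p) (h3 : Bounded p)
    (h4 : OProj p) (h5 : Factor p) (X : Set Ω) (hX : IsSubspace p X)
    (x : Ω) (hx : x ∈ X) (A : Set Ω) (hA : IsOrtho p A) (hAX : A ⊆ X)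
    (hxA : pSet p x A < 1) (y : Ω) (hyA : pSet p y A = 0)
    (hxy : pSet p x A + p x y = 1) : y ∈ X := by
  obtain ⟨B, hB, rfl⟩ := hX
  have hxB : pSet p x B = 1 := hx
  -- y is orthogonal to every element of A, and y ∉ A
  have hyA0 : ∀ a ∈ A, p y a = 0 := fun a ha => term_zero p h2 h3 y hA hyA ha
  have hyy : p y y = 1 := self_one p h1 h3 h4 y
  have hynA : y ∉ A := fun h => by simp [hyA0 y h] at hyy
  -- A' = insert y A is an ortho-set
  have hA' : IsOrtho p (insert y A) := by
    intro a ha b hb hab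
    rcases ha with rfl | ha
    · rcases hb with rfl | hb
      · exact absurd rfl hab
      · exact hyA0 b hb
    · rcases hb with rfl | hb
      · rw [h1]; exact hyA0 a ha
      · exact hA a ha b hb hab
  -- x and y generate A' with total weight 1
  have hxA' : pSet p x (insert y A) = 1 := by
    rw [pSet_insert p x y A hynA (h3 x A hA).1]
    linarith [hxy]
  have hyA' : pSet p y (insert y A) = 1 := by
    rw [pSet_insert p y y A hynA (h3 y A hA).1, hyA, hyy]; ring
  -- main argument: show pSet p y B = 1
  show pSet p y B = 1
  by_contra hne
  have hlt : pSet p y B < 1 := lt_of_le_of_ne (h3 y B hB).2 hne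
  obtain ⟨z, hzB0, hzy1⟩ := h4 y B hB hlt
  have hzb : ∀ b ∈ B, p z b = 0 := fun b hb => term_zero p h2 h3 z hB hzB0 hb
  have hzz : p z z = 1 := self_one p h1 h3 h4 z
  have hznB : z ∉ B := fun h => by simp [hzb z h] at hzz
  have hBz : IsOrtho p (insert z B) := by
    intro a ha b hb hab
    rcases ha with rfl | ha
    · rcases hb with rfl | hb
      · exact absurd rfl hab
      · exact hzb b hb
    · rcases hb with rfl | hb
      · rw [h1]; exact hzb a ha
      · exact hB a ha b hb hab
  -- any state generated by B is orthogonal to z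
  have key : ∀ u, pSet p u B = 1 → p u z = 0 := by
    intro u hu
    have hle : pSet p u (insert z B) ≤ 1 := (h3 u _ hBz).2
    rw [pSet_insert p u z B hznB (h3 u B hB).1, hu] at hle
    exact le_antisymm (by linarith) (h2 u z)
  have hxz : p x z = 0 := key x hxB
  have hzA : pSet p z A = 0 := by
    have : (fun a : A => p z a) = fun _ => 0 := by
      funext a
      rw [h1]
      exact key a (hAX a.2)
    unfold pSet
    rw [this, tsum_zero]
  -- z's overlap with A' is concentrated on y
  have hzA' : p z y = pSet p z (insert y A) := by
    rw [pSet_insert p z y A hynA (h3 z A hA).1, hzA]; ring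
  -- Factorization: p z x = p z y * p y x
  have hfac := h5 z y x (insert y A) hA' hyA' hxA' hzA'
  have hzx : p z x = 0 := by rw [h1]; exact hxz
  have hpyx : 0 < p y x := by rw [← h1]; linarith [hxy]
  have hzy0 : p z y = 0 := by
    rcases mul_eq_zero.1 (hzx ▸ hfac.symm) with h | h
    · exact h
    · linarith
  have : p y z = 0 := by rw [h1]; exact hzy0
  rw [this] at hzy1
  exact hne (by linarith)
end
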